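/- Let ū = 1 and π(S) = min_{i∈\bar S}(1 − p_i^0) with π(I\{0}) = 1. Fix an assortment S* ⊆ I\{0} and j ∈ S*, and suppose g(S*, j) ≤ λ for some λ ∈ ℝ. Then for every subassortment S ⊆ S* with j ∈ S, we also have g(S, j) ≤ λ; equivalently, removing j is (weakly) beneficial for every subassortment of S* containing j. (The proof splits into the three cases p_j^0 ≤ p_t^0 ≤ p_ℓ^0, p_t^0 ≤ p_j^0 ≤ p_ℓ^0, and p_t^0 ≤ p_ℓ^0 ≤ p_j^0, where 1 − p_ℓ^0 = π(S) and 1 − p_t^0 = π(S*).) -/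

import Mathlib

/-- For ū = 1 with π(S) = min_{i∈S̄}(1 − p_i^0) and π(I\{0}) = 1, if
g(S*, j) ≤ λ for some j ∈ S*, then g(S, j) ≤ λ for every subassortment S ⊆ S*
containing j, where g(S,j) = [ν_j r_j π(S\{j}) + Σ_{i∈S} ν_i r_i (π(S) − π(S\{j}))]/ν_j. -/
theorem stmt5 {n : ℕ} (r ν p : Fin n → ℝ)
    (hr : ∀ i, 0 ≤ r i) (hν : ∀ i, 0 < ν i) (hp : ∀ i, 0 ≤ p i ∧ p i ≤ 1)
    (π : Finset (Fin n) → ℝ)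
    (hπfull : π Finset.univ = 1)
    (hπdef : ∀ S : Finset (Fin n), S ≠ Finset.univ →
      π S = sInf {x : ℝ | ∃ i ∈ Sᶜ, x = 1 - p i})
    (g : Finset (Fin n) → Fin n → ℝ)
    (hg : ∀ S j, g S j =
      (ν j * r j * π (S.erase j) + ∑ i ∈ S, ν i * r i * (π S - π (S.erase j))) / ν j)
    (Sstar : Finset (Fin n)) (j : Fin n) (hj : j ∈ Sstar) (lam : ℝ)
    (h : g Sstar j ≤ lam) :
    ∀ S ⊆ Sstar, j ∈ S → g S j ≤ lam := by
  set f : Fin n → ℝ := fun i => 1 - p i with hf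
  have hf0 : ∀ i, 0 ≤ f i := fun i => by simp [hf]; exact (hp i).2
  have hf1 : ∀ i, f i ≤ 1 := fun i => by simp [hf]; exact (hp i).1
  -- π as a finite inf
  have hπinf : ∀ (S : Finset (Fin n)) (hS : Sᶜ.Nonempty), π S = Sᶜ.inf' hS f := by
    intro S hS
    have hSne : S ≠ Finset.univ := by
      intro hEq
      simp [hEq] at hS
    rw [hπdef S hSne]
    have : {x : ℝ | ∃ i ∈ Sᶜ, x = 1 - p i} = f '' ↑(Sᶜ) := by
      ext x
      simp only [Set.mem_image, Finset.mem_coe, Set.mem_setOf_eq, hf]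
      constructor
      · rintro ⟨i, hi, rfl⟩; exact ⟨i, hi, rfl⟩
      · rintro ⟨i, hi, rfl⟩; exact ⟨i, hi, rfl⟩
    rw [this, ← Finset.inf'_eq_csInf_image]
  -- bounds on π
  have hπle1 : ∀ S : Finset (Fin n), π S ≤ 1 := by
    intro S
    by_cases hS : S = Finset.univ
    · rw [hS, hπfull]
    · have hne : Sᶜ.Nonempty := by
        rw [Finset.nonempty_iff_ne_empty]
        simpa [Finset.compl_eq_empty_iff] using hS
      rw [hπinf S hne]
      obtain ⟨i, hi⟩ := id hne
      exact le_trans (Finset.inf'_le f hi) (hf1 i)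
  have hπ0 : ∀ S : Finset (Fin n), 0 ≤ π S := by
    intro S
    by_cases hS : S = Finset.univ
    · rw [hS, hπfull]; norm_num
    · have hne : Sᶜ.Nonempty := by
        rw [Finset.nonempty_iff_ne_empty]
        simpa [Finset.compl_eq_empty_iff] using hS
      rw [hπinf S hne]
      exact Finset.le_inf' hne f fun i _ => hf0 i
  -- monotonicity of π
  have hmono : ∀ S T : Finset (Fin n), S ⊆ T → π S ≤ π T := by
    intro S T hST
    by_cases hT : T = Finset.univ
    · rw [hT, hπfull]; exact hπle1 S
    · have hTne : Tᶜ.Nonempty := by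
        rw [Finset.nonempty_iff_ne_empty]
        simpa [Finset.compl_eq_empty_iff] using hT
      have hSne : Sᶜ.Nonempty := by
        obtain ⟨i, hi⟩ := hTne
        exact ⟨i, (Finset.compl_subset_compl.mpr hST) hi⟩
      rw [hπinf S hSne, hπinf T hTne]
      exact Finset.le_inf' hTne f fun i hi =>
        Finset.inf'_le f ((Finset.compl_subset_compl.mpr hST) hi)
  -- value of π on erase
  have herase : ∀ (S : Finset (Fin n)) (j : Fin n), j ∈ S →
      π (S.erase j) = min (π S) (f j) := by
    intro S j hjS
    have hne : (S.erase j)ᶜ.Nonempty := ⟨j, by simp⟩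
    apply le_antisymm
    · apply le_min
      · exact hmono _ S (Finset.erase_subset j S)
      · rw [hπinf _ hne]
        exact Finset.inf'_le f (by simp)
    · rw [hπinf _ hne]
      apply Finset.le_inf'
      intro i hi
      rcases eq_or_ne i j with rfl | hij
      · exact min_le_right _ _
      · have hiS : i ∈ Sᶜ := by
          simp only [Finset.mem_compl, Finset.mem_erase] at hi ⊢
          tauto
        have hle : π S ≤ f i := by
          rw [hπinf S ⟨i, hiS⟩]
          exact Finset.inf'_le f hiS
        exact le_trans (min_le_left _ _) hle
  -- main argument
  intro S hS hjS
  refine le_trans ?_ h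
  rw [hg, hg, herase S j hjS, herase Sstar j hj]
  rw [div_le_div_iff₀ (hν j) (hν j)]
  have hsum1 : ∑ i ∈ S, ν i * r i * (π S - min (π S) (f j))
      = (∑ i ∈ S, ν i * r i) * (π S - min (π S) (f j)) := by
    rw [Finset.sum_mul]
  have hsum2 : ∑ i ∈ Sstar, ν i * r i * (π Sstar - min (π Sstar) (f j))
      = (∑ i ∈ Sstar, ν i * r i) * (π Sstar - min (π Sstar) (f j)) := by
    rw [Finset.sum_mul]
  rw [hsum1, hsum2]
  set a := π S with ha
  set A := π Sstar with hA
  set c := f j with hcdef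
  set W : ℝ := ∑ i ∈ S, ν i * r i with hW
  set W' : ℝ := ∑ i ∈ Sstar, ν i * r i with hW'
  have hWnr : ν j * r j ≤ W :=
    Finset.single_le_sum (fun i _ => mul_nonneg (hν i).le (hr i)) hjS
  have hWW' : W ≤ W' :=
    Finset.sum_le_sum_of_subset_of_nonneg hS
      (fun i _ _ => mul_nonneg (hν i).le (hr i))
  have hnr0 : 0 ≤ ν j * r j := mul_nonneg (hν j).le (hr j)
  have haA : a ≤ A := hmono S Sstar hS
  have ha0 : 0 ≤ a := hπ0 S
  have hc0 : 0 ≤ c := hf0 j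
  have hνj : (0:ℝ) < ν j := hν j
  have key : ν j * r j * min a c + W * (a - min a c)
      ≤ ν j * r j * min A c + W' * (A - min A c) := by
    rcases le_total a c with h1 | h1
    · rcases le_total A c with h2 | h2
      · rw [min_eq_left h1, min_eq_left h2]
        nlinarith
      · rw [min_eq_left h1, min_eq_right h2]
        nlinarith [mul_nonneg (le_trans hnr0 (le_trans hWnr hWW')) (sub_nonneg.mpr h2)]
    · rw [min_eq_right h1, min_eq_right (le_trans h1 haA)]
      nlinarith [mul_le_mul hWW' (sub_le_sub_right haA c) (by linarith) (le_trans hnr0 (le_trans hWnr hWW'))]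
  nlinarith [key]
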